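/- Let M be a finite Markov chain, K a nontrivial strongly connected component of M, and M_K the Markov chain on K ∪ Out_K where transitions within K follow M and all states of Out_K are absorbing. Then for any s ∈ K, with probability 1 a path of M_K starting at s eventually either reaches Out_K or, if Out_K = ∅, remains in K forever; moreover the probabilities of reaching the distinct output states from s sum to the probability of ever leaving K, and when Out_K ≠ ∅ and every state of K has in M positive probability of exiting K eventually, these probabilities sum to 1. -/

import Mathlib

open scoped ENNReal Classical
open MeasureTheory

namespace CE

variable {S : Type}

/-- Positive-probability transition (edge of the underlying digraph). -/
def edge (P : S → S → ℝ≥0∞) (s t : S) : Prop := 0 < P s t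

/-- Finite path of the Markov chain with transition function `P`, starting at `s`. -/
def IsFPath (P : S → S → ℝ≥0∞) (s : S) (σ : List S) : Prop :=
  σ.head? = some s ∧ σ.Chain' (edge P)

/-- Infinite path of the Markov chain with transition function `P`, starting at `s`. -/
def IsPath (P : S → S → ℝ≥0∞) (s : S) (ω : ℕ → S) : Prop :=
  ω 0 = s ∧ ∀ n, edge P (ω n) (ω (n + 1))

/-- Reachability in the underlying digraph. -/
def Reach (P : S → S → ℝ≥0∞) : S → S → Prop :=
  Relation.ReflTransGen (edge P)

/-- Same strongly connected component. -/
def sccRel (P : S → S → ℝ≥0∞) (s t : S) : Prop :=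
  Reach P s t ∧ Reach P t s

/-- `s` belongs to a nontrivial SCC (more than one state, or a self-loop). -/
def nontriv (P : S → S → ℝ≥0∞) (s : S) : Prop :=
  (∃ t, t ≠ s ∧ sccRel P s t) ∨ edge P s s

/-- Cylinder (cone) of a finite path. -/
def Cyl (ρ : List S) : Set (ℕ → S) := {ω | ∀ i : Fin ρ.length, ω i.1 = ρ.get i}

/-- Finite paths from `s` reaching `A` exactly at their last state. -/
def FReach (P : S → S → ℝ≥0∞) (s : S) (A : Set S) : Set (List S) :=
  {σ | IsFPath P s σ ∧ (∃ h : σ ≠ [], σ.getLast h ∈ A) ∧ ∀ x ∈ σ.dropLast, x ∉ A}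

/-- Infinite sequences that eventually visit `A`. -/
def ReachSet (A : Set S) : Set (ℕ → S) := {ω | ∃ i, ω i ∈ A}

/-- Product of transition probabilities along a finite path. -/
noncomputable def cylProb (P : S → S → ℝ≥0∞) (d : S) (ρ : List S) : ℝ≥0∞ :=
  ∏ i ∈ Finset.range (ρ.length - 1), P (ρ.getD i d) (ρ.getD (i + 1) d)

/-- `σ ⪯_f ω`: subsequence embedding satisfying freshness and inertia w.r.t. `r`. -/
structure Embeds (r : S → S → Prop) (σ : List S) (ω : ℕ → S) (f : ℕ → ℕ) : Prop where
  mono : ∀ i j, i < j → j < σ.length → f i < f j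
  agree : ∀ i : Fin σ.length, σ.get i = ω (f i.1)
  fresh : ∀ i < σ.length, ∀ j < f i, ¬ r (ω (f i)) (ω j)
  inertia : ∀ i, i + 1 < σ.length → ∀ j, f i < j → j < f (i + 1) → r (ω (f i)) (ω j)

/-- There is a path from `s` to `t` staying in the SCC of `s` until `t`. -/
def exitReach (P : S → S → ℝ≥0∞) (s t : S) : Prop :=
  ∃ l : List S, List.Chain (edge P) s (l ++ [t]) ∧ ∀ u ∈ s :: l, sccRel P s u

/-- The SCC of `s` has no output states. -/
def noOut (P : S → S → ℝ≥0∞) (s : S) : Prop :=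
  ∀ u t, sccRel P s u → edge P u t → sccRel P s t

/-- Edges of the acyclic reduction. -/
def AcEdge (P : S → S → ℝ≥0∞) (s t : S) : Prop :=
  (¬ nontriv P s ∧ edge P s t) ∨
  (nontriv P s ∧ ¬ sccRel P s t ∧ exitReach P s t) ∨
  (nontriv P s ∧ t = s ∧ noOut P s)

/-- States of the acyclic reduction: states outside nontrivial SCCs and input states. -/
def AcState (P : S → S → ℝ≥0∞) (s : S) : Prop :=
  ¬ nontriv P s ∨ ∃ t, ¬ sccRel P s t ∧ edge P t s

/-- A rail: a finite path of the acyclic reduction starting at `s0`. -/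
def IsRail (P : S → S → ℝ≥0∞) (s0 : S) (σ : List S) : Prop :=
  σ.head? = some s0 ∧ σ.Chain' (AcEdge P) ∧ ∀ x ∈ σ, AcState P x

/-- The torrent of a rail `σ`: infinite paths into which `σ` embeds. -/
def Torr (P : S → S → ℝ≥0∞) (r : S → S → Prop) (s0 : S) (σ : List S) : Set (ℕ → S) :=
  {ω | IsPath P s0 ω ∧ ∃ f, Embeds r σ ω f}

def toSeq (d : S) (ρ : List S) : ℕ → S := fun n => ρ.getD n d

/-- Torrent generators: finite paths `ρ` with an embedding of `σ` ending at the last state. -/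
def Gen (P : S → S → ℝ≥0∞) (r : S → S → Prop) (s0 : S) (σ : List S) : Set (List S) :=
  {ρ | IsFPath P s0 ρ ∧ ρ ≠ [] ∧ ∃ f, Embeds r σ (toSeq s0 ρ) f ∧
    (∀ i < σ.length, f i < ρ.length) ∧ f (σ.length - 1) = ρ.length - 1}

/-- Finite paths from `t` to `s` staying in the SCC of `t` except the final state `s`. -/
def ExitPaths (P : S → S → ℝ≥0∞) (t s : S) : Set (List S) :=
  {π | π.head? = some t ∧ (∃ h : π ≠ [], π.getLast h = s) ∧ π.Chain' (edge P) ∧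
    ∀ u ∈ π.dropLast, sccRel P t u}

/-- `M_ψ`: make absorbing all states of `A` and all states not reaching `A`. -/
noncomputable def absP (P : S → S → ℝ≥0∞) (A : Set S) : S → S → ℝ≥0∞ := fun s t =>
  if s ∈ A ∨ ¬ ∃ a ∈ A, Reach P s a then (if t = s then 1 else 0) else P s t

/-- Absorbing state. -/
def Absorbing (P : S → S → ℝ≥0∞) (s : S) : Prop :=
  P s s = 1 ∧ ∀ t, t ≠ s → P s t = 0

/-- Output states of the SCC of `k`. -/
def OutK (P : S → S → ℝ≥0∞) (k : S) : Set S :=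
  {t | ¬ sccRel P k t ∧ ∃ u, sccRel P k u ∧ edge P u t}

/-- The chain `M_K` of the SCC of `k`, with the output states made absorbing. -/
noncomputable def PK (P : S → S → ℝ≥0∞) (k : S) : S → S → ℝ≥0∞ := fun s t =>
  if sccRel P k s then P s t else (if t = s then 1 else 0)

/-- Absorbing state of the acyclic reduction: its only edge is a self-loop. -/
def AcAbsorbing (P : S → S → ℝ≥0∞) (s : S) : Prop :=
  AcEdge P s s ∧ ∀ t, AcEdge P s t → t = s


/-! ### Auxiliary machinery for Statement 13 -/

section Aux13

set_option linter.unusedSectionVars false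

variable [Fintype S]

/-- Path property for a tuple of `n+1` states. -/
def tpath (Q : S → S → ℝ≥0∞) : (n : ℕ) → (Fin (n + 1) → S) → Prop
  | 0, _ => True
  | n + 1, f => edge Q (f 0) (f 1) ∧ tpath Q n (Fin.tail f)

/-- Product of transition probabilities along a tuple. -/
noncomputable def wprod (Q : S → S → ℝ≥0∞) : (n : ℕ) → (Fin (n + 1) → S) → ℝ≥0∞
  | 0, _ => 1
  | n + 1, f => Q (f 0) (f 1) * wprod Q n (Fin.tail f)

lemma fin_one_eq_succ_zero (n : ℕ) : (1 : Fin (n + 2)) = Fin.succ 0 := by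
  ext; simp

lemma cons_one (x : S) (g : Fin (n + 1) → S) : (Fin.cons x g : Fin (n + 2) → S) 1 = g 0 := by
  rw [fin_one_eq_succ_zero, Fin.cons_succ]

lemma wprod_cons (Q : S → S → ℝ≥0∞) (n : ℕ) (x : S) (g : Fin (n + 1) → S) :
    wprod Q (n + 1) (Fin.cons x g) = Q x (g 0) * wprod Q n g := by
  simp only [wprod, Fin.cons_zero, cons_one, Fin.tail_cons]

lemma tpath_cons (Q : S → S → ℝ≥0∞) (n : ℕ) (x : S) (g : Fin (n + 1) → S) :
    tpath Q (n + 1) (Fin.cons x g) ↔ edge Q x (g 0) ∧ tpath Q n g := by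
  simp only [tpath, Fin.cons_zero, cons_one, Fin.tail_cons]

lemma cylProb_cons (Q : S → S → ℝ≥0∞) (d x y : S) (l : List S) :
    cylProb Q d (x :: y :: l) = Q x y * cylProb Q d (y :: l) := by
  unfold cylProb
  simp only [List.length_cons, Nat.add_sub_cancel]
  rw [Finset.prod_range_succ', mul_comm]
  congr 1

lemma cylProb_ofFn (Q : S → S → ℝ≥0∞) (d : S) :
    ∀ (n : ℕ) (f : Fin (n + 1) → S), cylProb Q d (List.ofFn f) = wprod Q n f
  | 0, f => by simp [cylProb, wprod]
  | n + 1, f => by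
    have h1 : List.ofFn f = f 0 :: List.ofFn (Fin.tail f) := List.ofFn_succ (f := f)
    have h2 : List.ofFn (Fin.tail f) = Fin.tail f 0 :: List.ofFn (Fin.tail (Fin.tail f)) :=
      List.ofFn_succ
    rw [h1, h2, cylProb_cons, ← h2, cylProb_ofFn Q d n (Fin.tail f)]
    simp only [wprod]
    rw [show Fin.tail f 0 = f 1 by rw [fin_one_eq_succ_zero]; rfl]

lemma chain'_ofFn (Q : S → S → ℝ≥0∞) :
    ∀ (n : ℕ) (f : Fin (n + 1) → S), (List.ofFn f).Chain' (edge Q) ↔ tpath Q n f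
  | 0, f => by
    rw [show List.ofFn f = [f 0] by simp [List.ofFn_succ]]
    simp [tpath, List.Chain']
  | n + 1, f => by
    have h1 : List.ofFn f = f 0 :: List.ofFn (Fin.tail f) := List.ofFn_succ (f := f)
    have h2 : List.ofFn (Fin.tail f) = Fin.tail f 0 :: List.ofFn (Fin.tail (Fin.tail f)) :=
      List.ofFn_succ
    rw [h1, h2, show ∀ a b l, List.Chain' (edge Q) (a :: b :: l) ↔ edge Q a b ∧ List.Chain' (edge Q) (b :: l) from fun _ _ _ => List.isChain_cons_cons, ← h2, chain'_ofFn Q n (Fin.tail f)]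
    simp only [tpath]
    rw [show Fin.tail f 0 = f 1 by rw [fin_one_eq_succ_zero]; rfl]

lemma isFPath_ofFn (Q : S → S → ℝ≥0∞) (u : S) (n : ℕ) (f : Fin (n + 1) → S) :
    IsFPath Q u (List.ofFn f) ↔ (f 0 = u ∧ tpath Q n f) := by
  have h1 : List.ofFn f = f 0 :: List.ofFn (fun i => f i.succ) := List.ofFn_succ (f := f)
  unfold IsFPath
  rw [chain'_ofFn, h1]
  simp [eq_comm]

lemma tpath_of_isPath (Q : S → S → ℝ≥0∞) :
    ∀ (n : ℕ) (ω : ℕ → S), (∀ m, edge Q (ω m) (ω (m + 1))) →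
      tpath Q n (fun i : Fin (n + 1) => ω i.1)
  | 0, ω, _ => trivial
  | n + 1, ω, h => by
    simp only [tpath]
    constructor
    · simpa using h 0
    · have ih := tpath_of_isPath Q n (fun m => ω (m + 1)) (fun m => h (m + 1))
      have ht : Fin.tail (fun i : Fin (n + 2) => ω i.1) = fun i : Fin (n + 1) => ω (i.1 + 1) := by
        funext i; simp [Fin.tail]
      rw [ht]; exact ih

lemma sum_wprod (Q : S → S → ℝ≥0∞) (hQ : ∀ u, ∑ t, Q u t = 1) :
    ∀ (n : ℕ) (u : S), (∑ f : Fin (n + 1) → S, if f 0 = u then wprod Q n f else 0) = 1 := by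
  intro n
  induction n with
  | zero =>
    intro u
    rw [← Equiv.sum_comp (Fin.consEquiv (fun _ : Fin 1 => S))
      (fun f => if f 0 = u then wprod Q 0 f else 0), Fintype.sum_prod_type]
    simp [Fin.consEquiv, wprod, Finset.sum_ite_eq']
  | succ n ih =>
    intro u
    rw [← Equiv.sum_comp (Fin.consEquiv (fun _ : Fin (n + 2) => S))
      (fun f => if f 0 = u then wprod Q (n + 1) f else 0), Fintype.sum_prod_type]
    have step1 : ∀ x : S, (∑ g : Fin (n + 1) → S,
        if (Fin.consEquiv (fun _ : Fin (n + 2) => S)) (x, g) 0 = u then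
          wprod Q (n + 1) ((Fin.consEquiv (fun _ : Fin (n + 2) => S)) (x, g)) else 0)
        = if x = u then (∑ g : Fin (n + 1) → S, Q x (g 0) * wprod Q n g) else 0 := by
      intro x
      have : ∀ g : Fin (n + 1) → S,
          (if (Fin.consEquiv (fun _ : Fin (n + 2) => S)) (x, g) 0 = u then
            wprod Q (n + 1) ((Fin.consEquiv (fun _ : Fin (n + 2) => S)) (x, g)) else 0)
          = if x = u then Q x (g 0) * wprod Q n g else 0 := by
        intro g
        have e1 : (Fin.consEquiv (fun _ : Fin (n + 2) => S)) (x, g) = Fin.cons x g := rfl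
        rw [e1, Fin.cons_zero, wprod_cons]
      rw [Finset.sum_congr rfl fun g _ => this g]
      split_ifs <;> simp
    rw [Finset.sum_congr rfl fun x _ => step1 x, Finset.sum_ite_eq' Finset.univ u]
    simp only [Finset.mem_univ, if_true]
    have step2 : ∀ g : Fin (n + 1) → S, Q u (g 0) * wprod Q n g
        = ∑ v, if g 0 = v then Q u v * wprod Q n g else 0 := by
      intro g
      rw [Finset.sum_ite_eq]
      simp
    rw [Finset.sum_congr rfl fun g _ => step2 g, Finset.sum_comm]
    have step3 : ∀ v, (∑ g : Fin (n + 1) → S, if g 0 = v then Q u v * wprod Q n g else 0)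
        = Q u v * ∑ g : Fin (n + 1) → S, if g 0 = v then wprod Q n g else 0 := by
      intro v
      rw [Finset.mul_sum]
      exact Finset.sum_congr rfl fun g _ => by split_ifs <;> simp
    rw [Finset.sum_congr rfl fun v _ => step3 v]
    simp only [ih]
    simpa using hQ u

/-- Probability of staying in `K` for `n` more steps. -/
noncomputable def stayP (Q : S → S → ℝ≥0∞) (K : Set S) : ℕ → S → ℝ≥0∞
  | 0, _ => 1
  | n + 1, u => ∑ v, if v ∈ K then Q u v * stayP Q K n v else 0

lemma stayP_zero (Q : S → S → ℝ≥0∞) (K : Set S) (u : S) : stayP Q K 0 u = 1 := rfl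

lemma stayP_succ (Q : S → S → ℝ≥0∞) (K : Set S) (n : ℕ) (u : S) :
    stayP Q K (n + 1) u = ∑ v, if v ∈ K then Q u v * stayP Q K n v else 0 := rfl

lemma stayP_le_one (Q : S → S → ℝ≥0∞) (K : Set S) (hQ : ∀ u, ∑ t, Q u t = 1) :
    ∀ (n : ℕ) (u : S), stayP Q K n u ≤ 1
  | 0, u => le_refl 1
  | n + 1, u => by
    rw [stayP_succ, ← hQ u]
    refine Finset.sum_le_sum fun v _ => ?_
    split_ifs
    · calc Q u v * stayP Q K n v ≤ Q u v * 1 :=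
        mul_le_mul_right (stayP_le_one Q K hQ n v) _
      _ = Q u v := mul_one _
    · exact zero_le

lemma stayP_succ_le (Q : S → S → ℝ≥0∞) (K : Set S) (hQ : ∀ u, ∑ t, Q u t = 1) :
    ∀ (n : ℕ) (u : S), stayP Q K (n + 1) u ≤ stayP Q K n u
  | 0, u => stayP_le_one Q K hQ 1 u
  | n + 1, u => by
    rw [stayP_succ, stayP_succ]
    refine Finset.sum_le_sum fun v _ => ?_
    split_ifs
    · exact mul_le_mul_right (stayP_succ_le Q K hQ n v) _
    · exact le_refl _

lemma stayP_anti (Q : S → S → ℝ≥0∞) (K : Set S) (hQ : ∀ u, ∑ t, Q u t = 1) {a b : ℕ}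
    (hab : a ≤ b) (u : S) : stayP Q K b u ≤ stayP Q K a u := by
  have : Antitone (fun n => stayP Q K n u) :=
    antitone_nat_of_succ_le (fun n => stayP_succ_le Q K hQ n u)
  exact this hab

lemma entry_le_one (Q : S → S → ℝ≥0∞) (hQ : ∀ u, ∑ t, Q u t = 1) (u v : S) : Q u v ≤ 1 := by
  rw [← hQ u]
  exact Finset.single_le_sum (fun t _ => zero_le (a := Q u t)) (Finset.mem_univ v)

lemma stayP_lt_one_step (Q : S → S → ℝ≥0∞) (K : Set S) (hQ : ∀ u, ∑ t, Q u t = 1)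
    {u v : S} {n : ℕ} (he : edge Q u v) (hv : v ∉ K ∨ stayP Q K n v < 1) :
    stayP Q K (n + 1) u < 1 := by
  rw [stayP_succ]
  have hsplit : ∀ g : S → ℝ≥0∞, ∑ x, g x = g v + ∑ x ∈ Finset.univ.erase v, g x := by
    intro g
    rw [Finset.add_sum_erase _ g (Finset.mem_univ v)]
  rw [hsplit]
  have hrest : (∑ x ∈ Finset.univ.erase v, if x ∈ K then Q u x * stayP Q K n x else 0)
      ≤ ∑ x ∈ Finset.univ.erase v, Q u x := by
    refine Finset.sum_le_sum fun x _ => ?_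
    split_ifs
    · calc Q u x * stayP Q K n x ≤ Q u x * 1 :=
        mul_le_mul_right (stayP_le_one Q K hQ n x) _
      _ = Q u x := mul_one _
    · exact zero_le
  have hrest_top : (∑ x ∈ Finset.univ.erase v, Q u x) ≠ ⊤ := by
    have h1 : (∑ x ∈ Finset.univ.erase v, Q u x) ≤ 1 := by
      refine le_trans (Finset.sum_le_sum_of_subset (Finset.erase_subset _ _)) ?_
      exact le_of_eq (hQ u)
    exact ne_top_of_le_ne_top ENNReal.one_ne_top h1
  have hterm : (if v ∈ K then Q u v * stayP Q K n v else 0) < Q u v := by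
    rcases hv with hv | hv
    · rw [if_neg hv]; exact he
    · split_ifs
      · have hQuv1 : Q u v ≠ ⊤ := ne_top_of_le_ne_top ENNReal.one_ne_top (entry_le_one Q hQ u v)
        calc Q u v * stayP Q K n v < Q u v * 1 := by
              exact ENNReal.mul_lt_mul_right (ne_of_gt he) hQuv1 hv
        _ = Q u v := mul_one _
      · exact he
  calc (if v ∈ K then Q u v * stayP Q K n v else 0)
        + ∑ x ∈ Finset.univ.erase v, (if x ∈ K then Q u x * stayP Q K n x else 0)
      ≤ (if v ∈ K then Q u v * stayP Q K n v else 0) + ∑ x ∈ Finset.univ.erase v, Q u x :=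
        add_le_add_right hrest _
    _ < Q u v + ∑ x ∈ Finset.univ.erase v, Q u x := by
        exact ENNReal.add_lt_add_right hrest_top hterm
    _ = ∑ x, Q u x := (hsplit (Q u ·)).symm
    _ = 1 := hQ u

lemma stayP_add_le (Q : S → S → ℝ≥0∞) (K : Set S) (hQ : ∀ u, ∑ t, Q u t = 1)
    {b : ℕ} {θ : ℝ≥0∞} (hb : ∀ v ∈ K, stayP Q K b v ≤ θ) :
    ∀ (a : ℕ) (u : S), u ∈ K → stayP Q K (a + b) u ≤ stayP Q K a u * θ
  | 0, u, hu => by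
    rw [zero_add, stayP_zero, one_mul]
    exact hb u hu
  | a + 1, u, hu => by
    have h1 : a + 1 + b = (a + b) + 1 := by omega
    rw [h1, stayP_succ, stayP_succ, Finset.sum_mul]
    refine Finset.sum_le_sum fun v _ => ?_
    split_ifs with hv
    · calc Q u v * stayP Q K (a + b) v ≤ Q u v * (stayP Q K a v * θ) :=
        mul_le_mul_right (stayP_add_le Q K hQ hb a v hv) _
      _ = Q u v * stayP Q K a v * θ := by rw [mul_assoc]
    · simp

lemma stayP_pow (Q : S → S → ℝ≥0∞) (K : Set S) (hQ : ∀ u, ∑ t, Q u t = 1)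
    {b : ℕ} {θ : ℝ≥0∞} (hb : ∀ v ∈ K, stayP Q K b v ≤ θ) :
    ∀ (j : ℕ) (u : S), u ∈ K → stayP Q K (b * j) u ≤ θ ^ j
  | 0, u, _ => by rw [Nat.mul_zero, stayP_zero, pow_zero]
  | j + 1, u, hu => by
    have h1 : b * (j + 1) = b * j + b := by ring
    rw [h1, pow_succ]
    calc stayP Q K (b * j + b) u ≤ stayP Q K (b * j) u * θ := stayP_add_le Q K hQ hb _ u hu
      _ ≤ θ ^ j * θ := mul_le_mul_left (stayP_pow Q K hQ hb j u hu) θ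

lemma tuple_staying_le_stayP (Q : S → S → ℝ≥0∞) (K : Set S) (hQ : ∀ u, ∑ t, Q u t = 1) :
    ∀ (n : ℕ) (u : S),
      (∑ f : Fin (n + 1) → S, if (f 0 = u ∧ ∀ i, f i ∈ K) then wprod Q n f else 0)
        ≤ stayP Q K n u := by
  intro n
  induction n with
  | zero =>
    intro u
    rw [stayP_zero, ← sum_wprod Q hQ 0 u]
    refine Finset.sum_le_sum fun f _ => ?_
    split_ifs with h1 h2
    · exact le_refl _
    · exact absurd h1.1 h2
    · exact zero_le
    · exact le_refl _
  | succ n ih =>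
    intro u
    rw [← Equiv.sum_comp (Fin.consEquiv (fun _ : Fin (n + 2) => S))
      (fun f => if (f 0 = u ∧ ∀ i, f i ∈ K) then wprod Q (n + 1) f else 0),
      Fintype.sum_prod_type]
    have key1 : ∀ (x : S) (g : Fin (n + 1) → S),
        (if ((Fin.consEquiv (fun _ : Fin (n + 2) => S)) (x, g) 0 = u ∧
            ∀ i, (Fin.consEquiv (fun _ : Fin (n + 2) => S)) (x, g) i ∈ K) then
          wprod Q (n + 1) ((Fin.consEquiv (fun _ : Fin (n + 2) => S)) (x, g)) else 0)
        = if (x = u ∧ x ∈ K ∧ ∀ i, g i ∈ K) then Q x (g 0) * wprod Q n g else 0 := by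
      intro x g
      have e1 : (Fin.consEquiv (fun _ : Fin (n + 2) => S)) (x, g) = Fin.cons x g := rfl
      rw [e1, wprod_cons, Fin.cons_zero]
      congr 1
      rw [eq_iff_iff]
      constructor
      · rintro ⟨hx, hall⟩
        refine ⟨hx, ?_, fun i => ?_⟩
        · have := hall 0; rwa [Fin.cons_zero] at this
        · have := hall i.succ; rwa [Fin.cons_succ] at this
      · rintro ⟨hx, hxK, hall⟩
        refine ⟨hx, fun i => ?_⟩
        refine Fin.cases ?_ ?_ i
        · rwa [Fin.cons_zero]
        · intro j; rw [Fin.cons_succ]; exact hall j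
    rw [Finset.sum_congr rfl fun x _ => Finset.sum_congr rfl fun g _ => key1 x g]
    by_cases hu : u ∈ K
    · have collapse : ∀ x : S, (∑ g : Fin (n + 1) → S,
          if (x = u ∧ x ∈ K ∧ ∀ i, g i ∈ K) then Q x (g 0) * wprod Q n g else 0)
          = if x = u then (∑ g : Fin (n + 1) → S,
              if (∀ i, g i ∈ K) then Q u (g 0) * wprod Q n g else 0) else 0 := by
        intro x
        by_cases hx : x = u
        · subst hx
          rw [if_pos rfl]
          refine Finset.sum_congr rfl fun g _ => ?_
          by_cases hg : ∀ i, g i ∈ K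
          · rw [if_pos ⟨rfl, hu, hg⟩, if_pos hg]
          · rw [if_neg (fun h => hg h.2.2), if_neg hg]
        · rw [if_neg hx]
          exact Finset.sum_eq_zero fun g _ => if_neg (fun h => hx h.1)
      rw [Finset.sum_congr rfl fun x _ => collapse x,
        Finset.sum_ite_eq' Finset.univ u, if_pos (Finset.mem_univ u)]
      have insertv : ∀ g : Fin (n + 1) → S,
          (if (∀ i, g i ∈ K) then Q u (g 0) * wprod Q n g else 0)
          = ∑ v, if g 0 = v then (if (∀ i, g i ∈ K) then Q u v * wprod Q n g else 0) else 0 := by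
        intro g
        rw [Finset.sum_ite_eq]
        simp
      rw [Finset.sum_congr rfl fun g _ => insertv g, Finset.sum_comm, stayP_succ]
      refine Finset.sum_le_sum fun v _ => ?_
      by_cases hv : v ∈ K
      · rw [if_pos hv]
        have e2 : ∀ g : Fin (n + 1) → S,
            (if g 0 = v then (if (∀ i, g i ∈ K) then Q u v * wprod Q n g else 0) else 0)
            = Q u v * (if (g 0 = v ∧ ∀ i, g i ∈ K) then wprod Q n g else 0) := by
          intro g
          by_cases h1 : g 0 = v
          · by_cases h2 : ∀ i, g i ∈ K
            · rw [if_pos h1, if_pos h2, if_pos ⟨h1, h2⟩]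
            · rw [if_pos h1, if_neg h2, if_neg (fun h => h2 h.2), mul_zero]
          · rw [if_neg h1, if_neg (fun h => h1 h.1), mul_zero]
        rw [Finset.sum_congr rfl fun g _ => e2 g, ← Finset.mul_sum]
        exact mul_le_mul_right (ih v) _
      · rw [if_neg hv]
        refine le_of_eq (Finset.sum_eq_zero fun g _ => ?_)
        split_ifs with h1 h2
        · exact absurd (h1 ▸ h2 0) hv
        · rfl
        · rfl
    · refine le_trans (le_of_eq (Finset.sum_eq_zero fun x _ => Finset.sum_eq_zero fun g _ => ?_))
        (zero_le)
      refine if_neg ?_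
      rintro ⟨hx, hxK, -⟩
      exact hu (hx ▸ hxK)

/-- Sum of path-weights of length `n` tuples from `u` ending in `X`. -/
noncomputable def cB (Q : S → S → ℝ≥0∞) (u : S) (n : ℕ) (X : Set S) : ℝ≥0∞ :=
  ∑ f : Fin (n + 1) → S,
    if (f 0 = u ∧ tpath Q n f ∧ f (Fin.last n) ∈ X) then wprod Q n f else 0

lemma cB_add_le_one (Q : S → S → ℝ≥0∞) (hQ : ∀ u, ∑ t, Q u t = 1) {u : S} {n : ℕ}
    {X Y : Set S} (hd : ∀ x, x ∈ X → x ∉ Y) : cB Q u n X + cB Q u n Y ≤ 1 := by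
  rw [cB, cB, ← Finset.sum_add_distrib, ← sum_wprod Q hQ n u]
  refine Finset.sum_le_sum fun f _ => ?_
  by_cases hX : (f 0 = u ∧ tpath Q n f ∧ f (Fin.last n) ∈ X)
  · rw [if_pos hX, if_neg (fun h => hd _ hX.2.2 h.2.2), add_zero, if_pos hX.1]
  · rw [if_neg hX, zero_add]
    by_cases hY : (f 0 = u ∧ tpath Q n f ∧ f (Fin.last n) ∈ Y)
    · rw [if_pos hY, if_pos hY.1]
    · rw [if_neg hY]
      exact zero_le

lemma cB_sum_singleton_le (Q : S → S → ℝ≥0∞) (u : S) (n : ℕ) (X : Set S) :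
    (∑ t, if t ∈ X then cB Q u n {t} else 0) ≤ cB Q u n X := by
  unfold cB
  have h1 : ∀ t : S, (if t ∈ X then ∑ f : Fin (n + 1) → S,
        (if (f 0 = u ∧ tpath Q n f ∧ f (Fin.last n) ∈ ({t} : Set S)) then wprod Q n f else 0)
        else 0)
      = ∑ f : Fin (n + 1) → S,
        if (t ∈ X ∧ f 0 = u ∧ tpath Q n f ∧ f (Fin.last n) = t) then wprod Q n f else 0 := by
    intro t
    by_cases ht : t ∈ X
    · rw [if_pos ht]
      refine Finset.sum_congr rfl fun f _ => ?_
      congr 1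
      rw [eq_iff_iff]
      constructor
      · rintro ⟨h1, h2, h3⟩
        exact ⟨ht, h1, h2, Set.mem_singleton_iff.mp h3⟩
      · rintro ⟨_, h1, h2, h3⟩
        exact ⟨h1, h2, Set.mem_singleton_iff.mpr h3⟩
    · rw [if_neg ht]
      exact (Finset.sum_eq_zero fun f _ => if_neg (fun h => ht h.1)).symm
  rw [Finset.sum_congr rfl fun t _ => (by convert h1 t), Finset.sum_comm]
  refine Finset.sum_le_sum fun f _ => ?_
  have h2 : ∀ t : S,
      (if (t ∈ X ∧ f 0 = u ∧ tpath Q n f ∧ f (Fin.last n) = t) then wprod Q n f else 0)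
      = if f (Fin.last n) = t then
          (if (t ∈ X ∧ f 0 = u ∧ tpath Q n f) then wprod Q n f else 0) else 0 := by
    intro t
    by_cases he : f (Fin.last n) = t
    · by_cases hc : t ∈ X ∧ f 0 = u ∧ tpath Q n f
      · rw [if_pos ⟨hc.1, hc.2.1, hc.2.2, he⟩, if_pos he, if_pos hc]
      · rw [if_neg (fun h => hc ⟨h.1, h.2.1, h.2.2.1⟩), if_pos he, if_neg hc]
    · rw [if_neg (fun h => he h.2.2.2), if_neg he]
  rw [Finset.sum_congr rfl fun t _ => h2 t,
    Finset.sum_ite_eq Finset.univ (f (Fin.last n)), if_pos (Finset.mem_univ _)]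
  by_cases hc : f (Fin.last n) ∈ X ∧ f 0 = u ∧ tpath Q n f
  · rw [if_pos hc, if_pos ⟨hc.2.1, hc.2.2, hc.1⟩]
  · rw [if_neg hc]
    exact zero_le

lemma PK_row (P : S → S → ℝ≥0∞) (k : S) (hrow : ∀ s, ∑ t, P s t = 1) :
    ∀ u, ∑ t, PK P k u t = 1 := by
  intro u
  by_cases h : sccRel P k u
  · simp only [PK, if_pos h]
    exact hrow u
  · simp only [PK, if_neg h]
    rw [Finset.sum_ite_eq' Finset.univ u (fun _ => (1 : ℝ≥0∞))]
    simp

lemma PK_absorb (P : S → S → ℝ≥0∞) (k : S) {u : S} (hu : ¬ sccRel P k u) {v : S}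
    (h : edge (PK P k) u v) : v = u := by
  by_contra hne
  have h0 : PK P k u v = 0 := by simp [PK, if_neg hu, if_neg hne]
  rw [edge, h0] at h
  exact lt_irrefl 0 h

lemma path_absorbed (P : S → S → ℝ≥0∞) (k : S) {s : S} {ω : ℕ → S}
    (hω : IsPath (PK P k) s ω) {n : ℕ} (hn : ¬ sccRel P k (ω n)) :
    ∀ j, ω (n + j) = ω n := by
  intro j
  induction j with
  | zero => rfl
  | succ j ih =>
    have hn' : ¬ sccRel P k (ω (n + j)) := by rw [ih]; exact hn
    have := PK_absorb P k hn' (hω.2 (n + j))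
    rw [show n + (j + 1) = (n + j) + 1 by omega, this, ih]

lemma path_first_out (P : S → S → ℝ≥0∞) (k : S) {s : S} (hs : sccRel P k s) {ω : ℕ → S}
    (hω : IsPath (PK P k) s ω) : ∀ n, ¬ sccRel P k (ω n) → ω n ∈ OutK P k := by
  intro n
  induction n with
  | zero =>
    intro h
    rw [hω.1] at h
    exact absurd hs h
  | succ n ih =>
    intro h
    by_cases hn : sccRel P k (ω n)
    · refine ⟨h, ω n, hn, ?_⟩
      have he : edge (PK P k) (ω n) (ω (n + 1)) := hω.2 n
      show 0 < P (ω n) (ω (n + 1))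
      have : PK P k (ω n) (ω (n + 1)) = P (ω n) (ω (n + 1)) := by simp [PK, if_pos hn]
      rw [edge, this] at he
      exact he
    · have := PK_absorb P k hn (hω.2 n)
      rw [this]
      exact ih hn

lemma stayP_lt_of_reach (P : S → S → ℝ≥0∞) (k : S) (hrow : ∀ s, ∑ t, P s t = 1) {t : S}
    (ht : ¬ sccRel P k t) :
    ∀ u, Reach P u t → sccRel P k u → ∃ n, stayP (PK P k) {x | sccRel P k x} n u < 1 := by
  intro u hreach
  induction hreach using Relation.ReflTransGen.head_induction_on with
  | refl => intro hu; exact absurd hu ht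
  | @head a c hac hcb ih =>
    intro ha
    have hedgeQ : edge (PK P k) a c := by
      show 0 < PK P k a c
      have : PK P k a c = P a c := by simp [PK, if_pos ha]
      rw [this]
      exact hac
    by_cases hc : sccRel P k c
    · obtain ⟨n, hn⟩ := ih hc
      exact ⟨n + 1, stayP_lt_one_step _ _ (PK_row P k hrow) hedgeQ (Or.inr hn)⟩
    · exact ⟨1, stayP_lt_one_step _ _ (PK_row P k hrow) hedgeQ (Or.inl hc)⟩

end Aux13


/-- in `M_K` (SCC of `k` with absorbing outputs), from any `s ∈ K`,
almost surely a path reaches `Out_K` or stays in `K` forever; the probabilities of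
reaching the several output states sum to the probability of ever leaving `K`; and
if `Out_K ≠ ∅` and every state of `K` can exit `K`, these probabilities sum to `1`. -/
theorem scc_exit_probabilities [Fintype S] [MeasurableSpace S]
    (P : S → S → ℝ≥0∞) (hrow : ∀ s, ∑ t, P s t = 1)
    (k : S) (hk : nontriv P k)
    (μ : S → Measure (ℕ → S)) (hprob : ∀ s, IsProbabilityMeasure (μ s))
    (hμ : ∀ s ρ, IsFPath (PK P k) s ρ → μ s (Cyl ρ) = cylProb (PK P k) k ρ)
    (hsupp : ∀ s, μ s {ω | ¬ IsPath (PK P k) s ω} = 0)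
    (s : S) (hs : sccRel P k s) :
    μ s {ω | (∃ i, ω i ∈ OutK P k) ∨ ∀ i, sccRel P k (ω i)} = 1 ∧
    (∑ t, if t ∈ OutK P k then μ s {ω | ∃ i, ω i = t} else 0)
      = μ s {ω | ∃ i, ¬ sccRel P k (ω i)} ∧
    ((OutK P k).Nonempty → (∀ u, sccRel P k u → ∃ t, ¬ sccRel P k t ∧ Reach P u t) →
      (∑ t, if t ∈ OutK P k then μ s {ω | ∃ i, ω i = t} else 0) = 1) := by
  classical
  haveI := hprob s
  have hQrow := PK_row P k hrow
  have hμuniv : μ s Set.univ = 1 := measure_univ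
  have hnull : μ s {ω | ¬ IsPath (PK P k) s ω} = 0 := hsupp s
  set K : Set S := {x | sccRel P k x} with hKdef
  have hsK : s ∈ K := hs
  -- the fundamental cylinder-cover upper bound
  have key : ∀ (n : ℕ) (X : Set S),
      μ s {ω | IsPath (PK P k) s ω ∧ ω n ∈ X} ≤ cB (PK P k) s n X := by
    intro n X
    set J : Finset (Fin (n + 1) → S) := Finset.univ.filter
      (fun f => f 0 = s ∧ tpath (PK P k) n f ∧ f (Fin.last n) ∈ X) with hJ
    have hcover : {ω | IsPath (PK P k) s ω ∧ ω n ∈ X} ⊆ ⋃ f ∈ J, Cyl (List.ofFn f) := by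
      rintro ω ⟨hω, hX⟩
      refine Set.mem_iUnion₂.mpr ⟨fun i : Fin (n + 1) => ω i.1, ?_, ?_⟩
      · rw [hJ, Finset.mem_filter]
        refine ⟨Finset.mem_univ _, hω.1, tpath_of_isPath _ n ω hω.2, ?_⟩
        show ω ((Fin.last n).1) ∈ X
        simpa using hX
      · intro i
        rw [List.get_ofFn]
        rfl
    calc μ s {ω | IsPath (PK P k) s ω ∧ ω n ∈ X}
        ≤ μ s (⋃ f ∈ J, Cyl (List.ofFn f)) := measure_mono hcover
      _ ≤ ∑ f ∈ J, μ s (Cyl (List.ofFn f)) := measure_biUnion_finset_le _ _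
      _ = ∑ f ∈ J, wprod (PK P k) n f := by
          refine Finset.sum_congr rfl fun f hf => ?_
          rw [hJ, Finset.mem_filter] at hf
          rw [hμ s _ ((isFPath_ofFn _ s n f).mpr ⟨hf.2.1, hf.2.2.1⟩), cylProb_ofFn]
      _ = cB (PK P k) s n X := by rw [cB, hJ, Finset.sum_filter]
  -- Part 1
  have part1 : μ s {ω | (∃ i, ω i ∈ OutK P k) ∨ ∀ i, sccRel P k (ω i)} = 1 := by
    have hGc : {ω : ℕ → S | (∃ i, ω i ∈ OutK P k) ∨ ∀ i, sccRel P k (ω i)}ᶜ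
        ⊆ {ω | ¬ IsPath (PK P k) s ω} := by
      intro ω hω
      rw [Set.mem_compl_iff, Set.mem_setOf_eq, not_or, not_exists, not_forall] at hω
      intro hpath
      obtain ⟨i, hi⟩ := hω.2
      exact hω.1 i (path_first_out P k hs hpath i hi)
    have h0 : μ s {ω : ℕ → S | (∃ i, ω i ∈ OutK P k) ∨ ∀ i, sccRel P k (ω i)}ᶜ = 0 :=
      measure_mono_null hGc hnull
    refine le_antisymm prob_le_one ?_
    calc (1 : ℝ≥0∞) = μ s Set.univ := hμuniv.symm
      _ = μ s ({ω : ℕ → S | (∃ i, ω i ∈ OutK P k) ∨ ∀ i, sccRel P k (ω i)}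
            ∪ {ω : ℕ → S | (∃ i, ω i ∈ OutK P k) ∨ ∀ i, sccRel P k (ω i)}ᶜ) := by
          rw [Set.union_compl_self]
      _ ≤ μ s {ω : ℕ → S | (∃ i, ω i ∈ OutK P k) ∨ ∀ i, sccRel P k (ω i)}
            + μ s {ω : ℕ → S | (∃ i, ω i ∈ OutK P k) ∨ ∀ i, sccRel P k (ω i)}ᶜ :=
          measure_union_le _ _
      _ = μ s {ω | (∃ i, ω i ∈ OutK P k) ∨ ∀ i, sccRel P k (ω i)} := by rw [h0, add_zero]
  -- Part 2 setup
  set A : ℕ → S → Set (ℕ → S) := fun n t => {ω | IsPath (PK P k) s ω ∧ ω n = t} with hAdef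
  set B : ℕ → Set (ℕ → S) := fun n => {ω | IsPath (PK P k) s ω ∧ ¬ sccRel P k (ω n)} with hBdef
  have hmonoA : ∀ t, ¬ sccRel P k t → Monotone (fun n => A n t) := by
    intro t ht
    refine monotone_nat_of_le_succ fun n ω hω => ?_
    obtain ⟨hp, he⟩ := hω
    refine ⟨hp, ?_⟩
    have hout : ¬ sccRel P k (ω n) := by rw [he]; exact ht
    have h1 : ω (n + 1) = ω n := path_absorbed P k hp hout 1
    rw [h1, he]
  have hmonoB : Monotone B := by
    refine monotone_nat_of_le_succ fun n ω hω => ?_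
    obtain ⟨hp, hn⟩ := hω
    refine ⟨hp, ?_⟩
    have h1 : ω (n + 1) = ω n := path_absorbed P k hp hn 1
    rw [h1]
    exact hn
  have claim2le : ∀ n, (∑ t, if t ∈ OutK P k then μ s (A n t) else 0) ≤ μ s (B n) := by
    intro n
    have h1 : (1 : ℝ≥0∞) ≤ μ s (B n) + cB (PK P k) s n K := by
      have hcov : (Set.univ : Set (ℕ → S)) ⊆ B n ∪ ({ω | ¬ IsPath (PK P k) s ω}
          ∪ {ω | IsPath (PK P k) s ω ∧ ω n ∈ K}) := by
        intro ω _
        by_cases hp : IsPath (PK P k) s ω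
        · by_cases hk : sccRel P k (ω n)
          · exact Or.inr (Or.inr ⟨hp, hk⟩)
          · exact Or.inl ⟨hp, hk⟩
        · exact Or.inr (Or.inl hp)
      calc (1 : ℝ≥0∞) = μ s Set.univ := hμuniv.symm
        _ ≤ μ s (B n ∪ ({ω | ¬ IsPath (PK P k) s ω}
              ∪ {ω | IsPath (PK P k) s ω ∧ ω n ∈ K})) := measure_mono hcov
        _ ≤ μ s (B n) + μ s ({ω | ¬ IsPath (PK P k) s ω}
              ∪ {ω | IsPath (PK P k) s ω ∧ ω n ∈ K}) := measure_union_le _ _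
        _ ≤ μ s (B n) + (μ s {ω | ¬ IsPath (PK P k) s ω}
              + μ s {ω | IsPath (PK P k) s ω ∧ ω n ∈ K}) :=
            add_le_add le_rfl (measure_union_le _ _)
        _ ≤ μ s (B n) + cB (PK P k) s n K := by
            refine add_le_add le_rfl ?_
            rw [hnull, zero_add]
            exact key n K
    have h2 : cB (PK P k) s n (OutK P k) + cB (PK P k) s n K ≤ 1 :=
      cB_add_le_one _ hQrow (fun x hx => hx.1)
    have h3 : (∑ t, if t ∈ OutK P k then μ s (A n t) else 0) ≤ cB (PK P k) s n (OutK P k) := by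
      refine le_trans (Finset.sum_le_sum fun t _ => ?_) (cB_sum_singleton_le _ _ _ _)
      split_ifs with h
      · refine le_trans (measure_mono ?_) (key n {t})
        rintro ω ⟨hp, he⟩
        exact ⟨hp, Set.mem_singleton_iff.mpr he⟩
      · exact le_rfl
    have hKtop : cB (PK P k) s n K ≠ ⊤ := by
      refine ne_top_of_le_ne_top ENNReal.one_ne_top (le_trans ?_ h2)
      exact le_add_self
    have h4 : cB (PK P k) s n (OutK P k) + cB (PK P k) s n K ≤ μ s (B n) + cB (PK P k) s n K :=
      le_trans h2 h1
    exact h3.trans ((ENNReal.add_le_add_iff_right hKtop).mp h4)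
  have dir1 : μ s {ω | ∃ i, ¬ sccRel P k (ω i)}
      ≤ ∑ t, if t ∈ OutK P k then μ s {ω | ∃ i, ω i = t} else 0 := by
    have hFsub : {ω : ℕ → S | ∃ i, ¬ sccRel P k (ω i)}
        ⊆ (⋃ n, B n) ∪ {ω | ¬ IsPath (PK P k) s ω} := by
      rintro ω ⟨i, hi⟩
      by_cases hp : IsPath (PK P k) s ω
      · exact Or.inl (Set.mem_iUnion.mpr ⟨i, hp, hi⟩)
      · exact Or.inr hp
    calc μ s {ω | ∃ i, ¬ sccRel P k (ω i)}
        ≤ μ s ((⋃ n, B n) ∪ {ω | ¬ IsPath (PK P k) s ω}) := measure_mono hFsub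
      _ ≤ μ s (⋃ n, B n) + μ s {ω | ¬ IsPath (PK P k) s ω} := measure_union_le _ _
      _ = μ s (⋃ n, B n) := by rw [hnull, add_zero]
      _ = ⨆ n, μ s (B n) := hmonoB.measure_iUnion
      _ ≤ ∑ t, if t ∈ OutK P k then μ s {ω | ∃ i, ω i = t} else 0 := by
          refine iSup_le fun n => ?_
          have hsub : B n ⊆ ⋃ t ∈ Finset.univ.filter (· ∈ OutK P k), A n t := by
            rintro ω ⟨hp, hn⟩
            refine Set.mem_iUnion₂.mpr ⟨ω n, ?_, hp, rfl⟩
            rw [Finset.mem_filter]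
            exact ⟨Finset.mem_univ _, path_first_out P k hs hp n hn⟩
          calc μ s (B n)
              ≤ μ s (⋃ t ∈ Finset.univ.filter (· ∈ OutK P k), A n t) := measure_mono hsub
            _ ≤ ∑ t ∈ Finset.univ.filter (· ∈ OutK P k), μ s (A n t) :=
                measure_biUnion_finset_le _ _
            _ = ∑ t, if t ∈ OutK P k then μ s (A n t) else 0 := Finset.sum_filter _ _
            _ ≤ ∑ t, if t ∈ OutK P k then μ s {ω | ∃ i, ω i = t} else 0 := by
                refine Finset.sum_le_sum fun t _ => ?_
                split_ifs with h
                · exact measure_mono (fun ω hω => ⟨n, hω.2⟩)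
                · exact le_rfl
  have dir2 : (∑ t, if t ∈ OutK P k then μ s {ω | ∃ i, ω i = t} else 0)
      ≤ μ s {ω | ∃ i, ¬ sccRel P k (ω i)} := by
    have hEt : ∀ t, ¬ sccRel P k t → μ s {ω | ∃ i, ω i = t} ≤ ⨆ n, μ s (A n t) := by
      intro t ht
      have hsub : {ω : ℕ → S | ∃ i, ω i = t}
          ⊆ (⋃ n, A n t) ∪ {ω | ¬ IsPath (PK P k) s ω} := by
        rintro ω ⟨i, hi⟩
        by_cases hp : IsPath (PK P k) s ω
        · exact Or.inl (Set.mem_iUnion.mpr ⟨i, hp, hi⟩)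
        · exact Or.inr hp
      calc μ s {ω | ∃ i, ω i = t}
          ≤ μ s ((⋃ n, A n t) ∪ {ω | ¬ IsPath (PK P k) s ω}) := measure_mono hsub
        _ ≤ μ s (⋃ n, A n t) + μ s {ω | ¬ IsPath (PK P k) s ω} := measure_union_le _ _
        _ = μ s (⋃ n, A n t) := by rw [hnull, add_zero]
        _ = ⨆ n, μ s (A n t) := (hmonoA t ht).measure_iUnion
    calc (∑ t, if t ∈ OutK P k then μ s {ω | ∃ i, ω i = t} else 0)
        ≤ ∑ t, ⨆ n, (if t ∈ OutK P k then μ s (A n t) else 0) := by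
          refine Finset.sum_le_sum fun t _ => ?_
          by_cases h : t ∈ OutK P k
          · simp only [if_pos h]
            exact hEt t h.1
          · simp only [if_neg h]
            simp
      _ = ⨆ n, ∑ t, (if t ∈ OutK P k then μ s (A n t) else 0) := by
          refine ENNReal.finsetSum_iSup_of_monotone fun t => ?_
          intro a b hab
          dsimp only
          by_cases h : t ∈ OutK P k
          · simp only [if_pos h]
            exact measure_mono (hmonoA t h.1 hab)
          · simp only [if_neg h]
            exact le_rfl
      _ ≤ μ s {ω | ∃ i, ¬ sccRel P k (ω i)} := by
          refine iSup_le fun n => le_trans (claim2le n) (measure_mono ?_)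
          rintro ω ⟨_, hn⟩
          exact ⟨n, hn⟩
  have part2 : (∑ t, if t ∈ OutK P k then μ s {ω | ∃ i, ω i = t} else 0)
      = μ s {ω | ∃ i, ¬ sccRel P k (ω i)} := le_antisymm dir2 dir1
  refine ⟨part1, part2, ?_⟩
  -- Part 3
  intro _hne hexit
  obtain ⟨nf, hnf⟩ : ∃ nf : S → ℕ, ∀ u ∈ K, stayP (PK P k) K (nf u) u < 1 := by
    have h : ∀ u : S, ∃ n, u ∈ K → stayP (PK P k) K n u < 1 := by
      intro u
      by_cases hu : u ∈ K
      · obtain ⟨t, ht, hr⟩ := hexit u hu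
        obtain ⟨n, hn⟩ := stayP_lt_of_reach P k hrow ht u hr hu
        exact ⟨n, fun _ => hn⟩
      · exact ⟨0, fun h => absurd h hu⟩
    choose nf hnf using h
    exact ⟨nf, fun u hu => hnf u hu⟩
  set m := Finset.univ.sup nf with hm
  set θ := Finset.univ.sup (fun v => if v ∈ K then stayP (PK P k) K m v else 0) with hθdef
  have hθlt : θ < 1 := by
    rw [hθdef]
    refine (Finset.sup_lt_iff (by norm_num)).mpr ?_
    intro v _
    split_ifs with hv
    · exact lt_of_le_of_lt
        (stayP_anti _ _ hQrow (Finset.le_sup (Finset.mem_univ v)) v) (hnf v hv)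
    · norm_num
  have hθle : ∀ v ∈ K, stayP (PK P k) K m v ≤ θ := by
    intro v hv
    rw [hθdef]
    exact le_trans (le_of_eq (if_pos hv).symm)
      (Finset.le_sup (f := fun v => if v ∈ K then stayP (PK P k) K m v else 0)
        (Finset.mem_univ v))
  have keyStay : ∀ n : ℕ,
      μ s {ω | IsPath (PK P k) s ω ∧ ∀ i : Fin (n + 1), ω i.1 ∈ K}
        ≤ stayP (PK P k) K n s := by
    intro n
    set J : Finset (Fin (n + 1) → S) := Finset.univ.filter
      (fun f => f 0 = s ∧ tpath (PK P k) n f ∧ ∀ i, f i ∈ K) with hJ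
    have hcover : {ω | IsPath (PK P k) s ω ∧ ∀ i : Fin (n + 1), ω i.1 ∈ K}
        ⊆ ⋃ f ∈ J, Cyl (List.ofFn f) := by
      rintro ω ⟨hω, hX⟩
      refine Set.mem_iUnion₂.mpr ⟨fun i : Fin (n + 1) => ω i.1, ?_, ?_⟩
      · rw [hJ, Finset.mem_filter]
        exact ⟨Finset.mem_univ _, hω.1, tpath_of_isPath _ n ω hω.2, fun i => hX i⟩
      · intro i
        rw [List.get_ofFn]
        rfl
    calc μ s {ω | IsPath (PK P k) s ω ∧ ∀ i : Fin (n + 1), ω i.1 ∈ K}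
        ≤ μ s (⋃ f ∈ J, Cyl (List.ofFn f)) := measure_mono hcover
      _ ≤ ∑ f ∈ J, μ s (Cyl (List.ofFn f)) := measure_biUnion_finset_le _ _
      _ = ∑ f ∈ J, wprod (PK P k) n f := by
          refine Finset.sum_congr rfl fun f hf => ?_
          rw [hJ, Finset.mem_filter] at hf
          rw [hμ s _ ((isFPath_ofFn _ s n f).mpr ⟨hf.2.1, hf.2.2.1⟩), cylProb_ofFn]
      _ = ∑ f : Fin (n + 1) → S,
            (if (f 0 = s ∧ tpath (PK P k) n f ∧ ∀ i, f i ∈ K) then wprod (PK P k) n f else 0) := by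
          rw [hJ, Finset.sum_filter]
      _ ≤ ∑ f : Fin (n + 1) → S,
            (if (f 0 = s ∧ ∀ i, f i ∈ K) then wprod (PK P k) n f else 0) := by
          refine Finset.sum_le_sum fun f _ => ?_
          by_cases h1 : f 0 = s ∧ tpath (PK P k) n f ∧ ∀ i, f i ∈ K
          · rw [if_pos h1, if_pos ⟨h1.1, h1.2.2⟩]
          · rw [if_neg h1]
            exact zero_le
      _ ≤ stayP (PK P k) K n s := tuple_staying_le_stayP _ _ hQrow n s
  have hFc : ∀ j : ℕ, μ s {ω | ∀ i, sccRel P k (ω i)} ≤ θ ^ j := by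
    intro j
    have hsub : {ω : ℕ → S | ∀ i, sccRel P k (ω i)}
        ⊆ {ω | ¬ IsPath (PK P k) s ω}
          ∪ {ω | IsPath (PK P k) s ω ∧ ∀ i : Fin (m * j + 1), ω i.1 ∈ K} := by
      intro ω hω
      by_cases hp : IsPath (PK P k) s ω
      · exact Or.inr ⟨hp, fun i => hω i.1⟩
      · exact Or.inl hp
    calc μ s {ω | ∀ i, sccRel P k (ω i)}
        ≤ μ s ({ω | ¬ IsPath (PK P k) s ω}
            ∪ {ω | IsPath (PK P k) s ω ∧ ∀ i : Fin (m * j + 1), ω i.1 ∈ K}) :=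
          measure_mono hsub
      _ ≤ μ s {ω | ¬ IsPath (PK P k) s ω}
            + μ s {ω | IsPath (PK P k) s ω ∧ ∀ i : Fin (m * j + 1), ω i.1 ∈ K} :=
          measure_union_le _ _
      _ = μ s {ω | IsPath (PK P k) s ω ∧ ∀ i : Fin (m * j + 1), ω i.1 ∈ K} := by
          rw [hnull, zero_add]
      _ ≤ stayP (PK P k) K (m * j) s := keyStay (m * j)
      _ ≤ θ ^ j := stayP_pow _ _ hQrow hθle j s hsK
  have hFc0 : μ s {ω | ∀ i, sccRel P k (ω i)} = 0 := by
    refine le_antisymm ?_ (zero_le)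
    exact ge_of_tendsto' (ENNReal.tendsto_pow_atTop_nhds_zero_of_lt_one hθlt) hFc
  have hcompl : {ω : ℕ → S | ∃ i, ¬ sccRel P k (ω i)}ᶜ = {ω | ∀ i, sccRel P k (ω i)} := by
    ext ω
    simp
  have hF1 : μ s {ω | ∃ i, ¬ sccRel P k (ω i)} = 1 := by
    refine le_antisymm prob_le_one ?_
    calc (1 : ℝ≥0∞) = μ s Set.univ := hμuniv.symm
      _ = μ s ({ω : ℕ → S | ∃ i, ¬ sccRel P k (ω i)}
            ∪ {ω : ℕ → S | ∃ i, ¬ sccRel P k (ω i)}ᶜ) := by rw [Set.union_compl_self]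
      _ ≤ μ s {ω | ∃ i, ¬ sccRel P k (ω i)}
            + μ s {ω : ℕ → S | ∃ i, ¬ sccRel P k (ω i)}ᶜ := measure_union_le _ _
      _ = μ s {ω | ∃ i, ¬ sccRel P k (ω i)} := by rw [hcompl, hFc0, add_zero]
  rw [part2]
  exact hF1


end CE
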